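/- Let γ > 0 and let f₀ be a probability density on ℝ. With the entropic conjugate φ₁*(s) = (e^{γs} − 1)/γ and the KL conjugate φ₂*(s) = e^s − 1, if f₀(x) ≥ c·e^{−a·x²} for all x ≤ x₀ (for some constants c, a > 0, x₀ ∈ ℝ, e.g. f₀ Gaussian), then for every θ₁, θ₂ ∈ ℝ and λ > 0, ∫ λ·φ₂*((φ₁*(θ₂ − x) + θ₁)/λ) f₀(x) dx = +∞. -/

import Mathlib

set_option maxHeartbeats 1000000


open MeasureTheory

theorem stmt18 (γ lam c a x₀ : ℝ) (hγ : 0 < γ) (hlam : 0 < lam) (hc : 0 < c) (ha : 0 < a)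
    (f₀ : ℝ → ℝ) (hf₀pos : ∀ x, 0 ≤ f₀ x) (hf₀int : ∫ x, f₀ x = 1)
    (hlower : ∀ x : ℝ, x ≤ x₀ → c * Real.exp (-a * x ^ 2) ≤ f₀ x)
    (θ₁ θ₂ : ℝ) :
    (∫⁻ x, ENNReal.ofReal
        (lam * (Real.exp (((Real.exp (γ * (θ₂ - x)) - 1) / γ + θ₁) / lam) - 1) * f₀ x)) = ⊤ := by
  set K := Real.exp (γ*θ₂)/(γ*lam) with hKdef
  have hK : 0 < K := div_pos (Real.exp_pos _) (mul_pos hγ hlam)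
  set C₀ := θ₁/lam - 1/(γ*lam) with hC₀def
  set D := Real.log (2/(lam*c)) with hDdef
  set S := |D - C₀| + |Real.log 2 - C₀| with hSdef
  have hS0 : 0 ≤ S := add_nonneg (abs_nonneg _) (abs_nonneg _)
  set T := 27*(a + S + 1)/(K*γ^3) with hTdef
  set M := min x₀ (min (-1) (-T)) with hMdef
  have hKγ : 0 < K*γ^3 := mul_pos hK (pow_pos hγ 3)
  have hMx : M ≤ x₀ := min_le_left _ _
  have hM1 : M ≤ -1 := le_trans (min_le_right _ _) (min_le_left _ _)
  have hMT : M ≤ -T := le_trans (min_le_right _ _) (min_le_right _ _)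
  clear_value K C₀ D S T M
  have key : ∀ x ≤ M, (1:ℝ) ≤ lam * (Real.exp (((Real.exp (γ * (θ₂ - x)) - 1) / γ + θ₁) / lam) - 1) * f₀ x := by
    intro x hx
    have hx0 : x ≤ x₀ := le_trans hx hMx
    have ht1 : 1 ≤ -x := by have := le_trans hx hM1; linarith
    have htT : T ≤ -x := by have := le_trans hx hMT; linarith
    set t := -x with htdef
    have ht0 : (0:ℝ) ≤ t := by linarith
    clear_value t
    have hE : ((Real.exp (γ * (θ₂ - x)) - 1) / γ + θ₁) / lam = K * Real.exp (γ * t) + C₀ := by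
      have h1 : γ * (θ₂ - x) = γ*θ₂ + γ*t := by rw [htdef]; ring
      rw [h1, Real.exp_add, hKdef, hC₀def]
      field_simp
      ring
    set E := K * Real.exp (γ * t) + C₀ with hEdef
    clear_value E
    -- cubic lower bound for exp
    have hcube : γ^3 * t^3 / 27 ≤ Real.exp (γ * t) := by
      have hs0 : (0:ℝ) ≤ γ*t/3 := by positivity
      have h1 : γ*t/3 ≤ Real.exp (γ*t/3) := by
        have := Real.add_one_le_exp (γ*t/3); linarith
      have h2 : (γ*t/3)^3 ≤ (Real.exp (γ*t/3))^3 := pow_le_pow_left₀ hs0 h1 3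
      have h3 : (Real.exp (γ*t/3))^3 = Real.exp (γ*t) := by
        rw [← Real.exp_nat_mul]
        push_cast
        ring
      calc γ^3 * t^3 / 27 = (γ*t/3)^3 := by ring
        _ ≤ (Real.exp (γ*t/3))^3 := h2
        _ = Real.exp (γ*t) := h3
    have h2 : a + S + 1 ≤ K*γ^3*t/27 := by
      have h27 : 27*(a + S + 1) ≤ t * (K*γ^3) := (div_le_iff₀ hKγ).mp (hTdef ▸ htT)
      nlinarith [h27]
    have hES : a*t^2 + S + C₀ ≤ E := by
      have h3 : K * (γ^3*t^3/27) ≤ K * Real.exp (γ*t) :=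
        mul_le_mul_of_nonneg_left hcube hK.le
      have h4 : t^2 * (a + S + 1) ≤ t^2 * (K*γ^3*t/27) :=
        mul_le_mul_of_nonneg_left h2 (sq_nonneg t)
      have ht2 : (1:ℝ) ≤ t^2 := by nlinarith [sq_nonneg (t-1)]
      have h5 : a*t^2 + S + 1 ≤ t^2*(a+S+1) := by
        nlinarith [mul_nonneg (by linarith : (0:ℝ) ≤ t^2 - 1) (by linarith : (0:ℝ) ≤ S + 1)]
      have heq : K*(γ^3*t^3/27) = t^2*(K*γ^3*t/27) := by ring
      rw [hEdef]; linarith [h3, h4, h5, heq]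
    have hSD : D - C₀ ≤ S := le_trans (le_abs_self _) (by rw [hSdef]; linarith [abs_nonneg (Real.log 2 - C₀)])
    have hSL : Real.log 2 - C₀ ≤ S := le_trans (le_abs_self _) (by rw [hSdef]; linarith [abs_nonneg (D - C₀)])
    have hat2 : (0:ℝ) ≤ a*t^2 := by positivity
    have hED : a*t^2 + D ≤ E := by linarith
    have hElog2 : Real.log 2 ≤ E := by linarith
    have hexp2 : (2:ℝ) ≤ Real.exp E := by
      calc (2:ℝ) = Real.exp (Real.log 2) := (Real.exp_log (by norm_num)).symm
        _ ≤ Real.exp E := Real.exp_le_exp.mpr hElog2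
    have hhalf : Real.exp E / 2 ≤ Real.exp E - 1 := by linarith
    have hf : c * Real.exp (-a * x^2) ≤ f₀ x := hlower x hx0
    have hlc : (0:ℝ) < 2/(lam*c) := by positivity
    have hxt : x^2 = t^2 := by rw [htdef]; ring
    have hEineq : D ≤ E + -a*x^2 := by rw [hxt]; linarith
    rw [hE]
    calc (1:ℝ) = lam*c/2 * (2/(lam*c)) := by field_simp
      _ = lam*c/2 * Real.exp D := by rw [hDdef, Real.exp_log hlc]
      _ ≤ lam*c/2 * Real.exp (E + -a*x^2) := by
          have : (0:ℝ) ≤ lam*c/2 := by positivity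
          exact mul_le_mul_of_nonneg_left (Real.exp_le_exp.mpr hEineq) this
      _ = lam * (Real.exp E / 2) * (c * Real.exp (-a*x^2)) := by
          rw [Real.exp_add]; ring
      _ ≤ lam * (Real.exp E - 1) * (c * Real.exp (-a*x^2)) := by
          have h0 : (0:ℝ) ≤ c * Real.exp (-a*x^2) := by positivity
          have := mul_le_mul_of_nonneg_left hhalf hlam.le
          exact mul_le_mul_of_nonneg_right this h0
      _ ≤ lam * (Real.exp E - 1) * f₀ x := by
          have h0 : (0:ℝ) ≤ lam * (Real.exp E - 1) := by
            have : (0:ℝ) ≤ Real.exp E - 1 := by linarith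
            positivity
          exact mul_le_mul_of_nonneg_left hf h0
  have hM : (∫⁻ x, (Set.Iic M).indicator (fun _ => (1:ENNReal)) x) = ⊤ := by
    rw [lintegral_indicator measurableSet_Iic]
    simp [Real.volume_Iic]
  refine top_unique ?_
  rw [← hM]
  refine lintegral_mono fun x => ?_
  by_cases hx : x ∈ Set.Iic M
  · rw [Set.indicator_of_mem hx]
    exact ENNReal.one_le_ofReal.mpr (key x hx)
  · rw [Set.indicator_of_notMem hx]
    exact zero_le
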